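/- Let f : ℝ^d → ℝ be continuous with 0 < h_f(x₀) < 1, where h_f(x₀) is the pointwise Hölder exponent at x₀. Let λ_j(x₀) be the dyadic cube of width 2^{−j} containing x₀ and 3λ_j(x₀) the concentric cube three times wider. Then h_f(x₀) = liminf_{j→∞} log(Os_f(3λ_j(x₀)))/log(2^{−j}). -/
import Mathlib


open Filter Set

/-- The oscillation of `f` on a set `S`. -/
noncomputable def osc {d : ℕ} (f : (Fin d → ℝ) → ℝ) (S : Set (Fin d → ℝ)) : ℝ :=
  sSup (f '' S) - sInf (f '' S)

/-- The set of Hölder exponents of `f` at `x₀` (for exponents `< 1` the Taylor polynomial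
reduces to `f(x₀)`). -/
def holderSet {d : ℕ} (f : (Fin d → ℝ) → ℝ) (x₀ : Fin d → ℝ) : Set ℝ :=
  {γ : ℝ | 0 ≤ γ ∧ ∃ C R : ℝ, 0 < C ∧ 0 < R ∧
    ∀ x, ‖x - x₀‖ ≤ R → |f x - f x₀| ≤ C * ‖x - x₀‖ ^ γ}

/-- The pointwise Hölder exponent of `f` at `x₀`. -/
noncomputable def holderExponent {d : ℕ} (f : (Fin d → ℝ) → ℝ) (x₀ : Fin d → ℝ) : ℝ :=
  sSup (holderSet f x₀)

/-- The cube `3λ_j(x₀)`: the dyadic cube of width `2^{−j}` containing `x₀`, enlarged to the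
concentric cube three times wider. -/
def tripleDyadicCube {d : ℕ} (j : ℕ) (x₀ : Fin d → ℝ) : Set (Fin d → ℝ) :=
  {x | ∀ i, ((⌊x₀ i * 2 ^ j⌋ : ℝ) - 1) / 2 ^ j ≤ x i ∧ x i ≤ ((⌊x₀ i * 2 ^ j⌋ : ℝ) + 2) / 2 ^ j}

section Aux

variable {d : ℕ} {x₀ : Fin d → ℝ} {j : ℕ}

lemma x0_mem_triple : x₀ ∈ tripleDyadicCube j x₀ := by
  intro i
  have h2 : (0:ℝ) < 2 ^ j := by positivity
  have hfl := Int.floor_le (x₀ i * 2 ^ j)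
  have hfl' := Int.lt_floor_add_one (x₀ i * 2 ^ j)
  constructor
  · rw [div_le_iff₀ h2]; linarith
  · rw [le_div_iff₀ h2]; linarith

lemma mem_triple_of_norm_le {x : Fin d → ℝ} (h : ‖x - x₀‖ ≤ ((2:ℝ) ^ j)⁻¹) :
    x ∈ tripleDyadicCube j x₀ := by
  intro i
  have h2 : (0:ℝ) < 2 ^ j := by positivity
  have hi : |x i - x₀ i| ≤ ((2:ℝ) ^ j)⁻¹ := by
    have h' := norm_le_pi_norm (x - x₀) i
    simp only [Pi.sub_apply, Real.norm_eq_abs] at h'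
    exact h'.trans h
  rw [abs_le] at hi
  have hfl := Int.floor_le (x₀ i * 2 ^ j)
  have hfl' := Int.lt_floor_add_one (x₀ i * 2 ^ j)
  have hinv : ((2:ℝ) ^ j)⁻¹ * 2 ^ j = 1 := inv_mul_cancel₀ (ne_of_gt h2)
  constructor
  · rw [div_le_iff₀ h2]; nlinarith [hi.1]
  · rw [le_div_iff₀ h2]; nlinarith [hi.2]

lemma norm_le_of_mem_triple {x : Fin d → ℝ} (h : x ∈ tripleDyadicCube j x₀) :
    ‖x - x₀‖ ≤ 2 * ((2:ℝ) ^ j)⁻¹ := by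
  have h2 : (0:ℝ) < 2 ^ j := by positivity
  rw [pi_norm_le_iff_of_nonneg (by positivity)]
  intro i
  obtain ⟨hl, hu⟩ := h i
  rw [div_le_iff₀ h2] at hl
  rw [le_div_iff₀ h2] at hu
  have hfl := Int.floor_le (x₀ i * 2 ^ j)
  have hfl' := Int.lt_floor_add_one (x₀ i * 2 ^ j)
  have hinv : ((2:ℝ) ^ j)⁻¹ * 2 ^ j = 1 := inv_mul_cancel₀ (ne_of_gt h2)
  simp only [Pi.sub_apply, Real.norm_eq_abs]
  rw [abs_le]
  constructor <;> nlinarith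

lemma isCompact_triple : IsCompact (tripleDyadicCube j x₀) := by
  have : tripleDyadicCube j x₀ = Set.pi Set.univ (fun i => Set.Icc
      (((⌊x₀ i * 2 ^ j⌋ : ℝ) - 1) / 2 ^ j) (((⌊x₀ i * 2 ^ j⌋ : ℝ) + 2) / 2 ^ j)) := by
    ext x
    simp only [tripleDyadicCube, Set.mem_setOf_eq, Set.mem_pi, Set.mem_univ, Set.mem_Icc,
      forall_const]
  rw [this]
  exact isCompact_univ_pi fun i => isCompact_Icc

lemma abs_sub_le_osc {f : (Fin d → ℝ) → ℝ} (hf : Continuous f) {x y : Fin d → ℝ}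
    (hx : x ∈ tripleDyadicCube j x₀) (hy : y ∈ tripleDyadicCube j x₀) :
    |f x - f y| ≤ osc f (tripleDyadicCube j x₀) := by
  have hK := isCompact_triple (x₀ := x₀) (j := j) |>.image hf
  have hA := hK.bddAbove
  have hB := hK.bddBelow
  have h1 : f x ≤ sSup (f '' tripleDyadicCube j x₀) := le_csSup hA ⟨x, hx, rfl⟩
  have h2 : f y ≤ sSup (f '' tripleDyadicCube j x₀) := le_csSup hA ⟨y, hy, rfl⟩
  have h3 : sInf (f '' tripleDyadicCube j x₀) ≤ f x := csInf_le hB ⟨x, hx, rfl⟩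
  have h4 : sInf (f '' tripleDyadicCube j x₀) ≤ f y := csInf_le hB ⟨y, hy, rfl⟩
  rw [abs_le]
  unfold osc
  constructor <;> linarith

lemma log_two_zpow (j : ℕ) :
    Real.log ((2:ℝ) ^ (-(j:ℤ))) = -((j:ℝ) * Real.log 2) := by
  rw [Real.log_zpow]
  push_cast
  ring

end Aux

/-- For a continuous function with `0 < h_f(x₀) < 1`, the pointwise Hölder exponent is given by
the liminf of `log Os_f(3λ_j(x₀)) / log 2^{−j}`. -/
theorem holderExponent_eq_liminf_osc {d : ℕ} (f : (Fin d → ℝ) → ℝ) (x₀ : Fin d → ℝ)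
    (hf : Continuous f) (h0 : 0 < holderExponent f x₀) (h1 : holderExponent f x₀ < 1) :
    holderExponent f x₀ =
      liminf (fun j : ℕ =>
        Real.log (osc f (tripleDyadicCube j x₀)) / Real.log ((2 : ℝ) ^ (-(j : ℤ)))) atTop := by
  set u : ℕ → ℝ := fun j : ℕ =>
    Real.log (osc f (tripleDyadicCube j x₀)) / Real.log ((2 : ℝ) ^ (-(j : ℤ))) with hu
  set h : ℝ := holderExponent f x₀ with hh
  have hbddS : BddAbove (holderSet f x₀) := by
    by_contra hb
    rw [hh, holderExponent, Real.sSup_of_not_bddAbove hb] at h0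
    exact lt_irrefl _ h0
  have hSne : (holderSet f x₀).Nonempty := by
    by_contra hb
    rw [Set.not_nonempty_iff_eq_empty] at hb
    rw [hh, holderExponent, hb, Real.sSup_empty] at h0
    exact lt_irrefl _ h0
  -- positivity of oscillations
  have hosc_pos : ∀ j : ℕ, 0 < osc f (tripleDyadicCube j x₀) := by
    intro j
    rcases lt_or_ge 0 (osc f (tripleDyadicCube j x₀)) with hlt | hle
    · exact hlt
    exfalso
    have hconst : ∀ x : Fin d → ℝ, ‖x - x₀‖ ≤ ((2:ℝ) ^ j)⁻¹ → f x = f x₀ := by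
      intro x hx
      have hle' := abs_sub_le_osc hf (mem_triple_of_norm_le hx) x0_mem_triple
      have h0' : |f x - f x₀| = 0 := le_antisymm (hle'.trans hle) (abs_nonneg _)
      have := abs_eq_zero.mp h0'
      linarith
    obtain ⟨B, hB⟩ := hbddS
    have hmem : max B 0 + 1 ∈ holderSet f x₀ := by
      refine ⟨by have := le_max_right B 0; linarith,
        1, ((2:ℝ) ^ j)⁻¹, one_pos, by positivity, ?_⟩
      intro x hx
      rw [hconst x hx, sub_self, abs_zero, one_mul]
      exact Real.rpow_nonneg (norm_nonneg _) _
    have h1' := hB hmem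
    have h2' := le_max_left B 0
    linarith
  -- oscillation upper bound from a Hölder estimate
  have hosc_le : ∀ γ C R : ℝ, 0 ≤ γ → 0 ≤ C →
      (∀ x, ‖x - x₀‖ ≤ R → |f x - f x₀| ≤ C * ‖x - x₀‖ ^ γ) →
      ∀ j : ℕ, 2 * ((2:ℝ) ^ j)⁻¹ ≤ R →
      osc f (tripleDyadicCube j x₀) ≤ 2 * (C * (2 * ((2:ℝ) ^ j)⁻¹) ^ γ) := by
    intro γ C R hγ hC hHol j hj
    have hb : ∀ x ∈ tripleDyadicCube j x₀,
        |f x - f x₀| ≤ C * (2 * ((2:ℝ) ^ j)⁻¹) ^ γ := by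
      intro x hx
      have hn := norm_le_of_mem_triple hx
      refine (hHol x (hn.trans hj)).trans ?_
      exact mul_le_mul_of_nonneg_left (Real.rpow_le_rpow (norm_nonneg _) hn hγ) hC
    have hne' : (f '' tripleDyadicCube j x₀).Nonempty := ⟨f x₀, x₀, x0_mem_triple, rfl⟩
    have hsup : sSup (f '' tripleDyadicCube j x₀) ≤ f x₀ + C * (2 * ((2:ℝ) ^ j)⁻¹) ^ γ := by
      apply csSup_le hne'
      rintro y ⟨x, hx, rfl⟩
      have := hb x hx
      rw [abs_le] at this
      linarith [this.2]
    have hinf : f x₀ - C * (2 * ((2:ℝ) ^ j)⁻¹) ^ γ ≤ sInf (f '' tripleDyadicCube j x₀) := by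
      apply le_csInf hne'
      rintro y ⟨x, hx, rfl⟩
      have := hb x hx
      rw [abs_le] at this
      linarith [this.1]
    unfold osc
    linarith
  -- eventual lower bound on the ratio
  have hev : ∀ a : ℝ, a < h → ∀ᶠ j : ℕ in atTop, a ≤ u j := by
    intro a ha
    obtain ⟨γ, hγS, haγ⟩ := exists_lt_of_lt_csSup hSne ha
    obtain ⟨hγ0, C, R, hC, hR, hHol⟩ := hγS
    have hlog2 : (0:ℝ) < Real.log 2 := Real.log_pos one_lt_two
    have hlogosc : ∀ j : ℕ, 2 * ((2:ℝ) ^ j)⁻¹ ≤ R →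
        Real.log (osc f (tripleDyadicCube j x₀)) ≤
          Real.log (2 * C) + γ * Real.log 2 - γ * j * Real.log 2 := by
      intro j hj
      have hle := hosc_le γ C R hγ0 hC.le hHol j hj
      have h2j : (0:ℝ) < ((2:ℝ) ^ j)⁻¹ := by positivity
      have hlog := Real.log_le_log (hosc_pos j) hle
      rw [show (2:ℝ) * (C * (2 * ((2:ℝ) ^ j)⁻¹) ^ γ) = (2 * C) * (2 * ((2:ℝ) ^ j)⁻¹) ^ γ by ring,
        Real.log_mul (by positivity) (by positivity),
        Real.log_rpow (by positivity),
        Real.log_mul (by norm_num) (ne_of_gt h2j),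
        Real.log_inv, Real.log_pow] at hlog
      nlinarith [hlog]
    have htend : Tendsto (fun j : ℕ => ((γ - a) * Real.log 2) * j) atTop atTop :=
      Tendsto.const_mul_atTop (by nlinarith) tendsto_natCast_atTop_atTop
    have hev1 : ∀ᶠ j : ℕ in atTop,
        Real.log (2 * C) + γ * Real.log 2 ≤ ((γ - a) * Real.log 2) * j :=
      htend.eventually_ge_atTop _
    have htend2 : Tendsto (fun j : ℕ => 2 * ((2:ℝ) ^ j)⁻¹) atTop (nhds 0) := by
      have : Tendsto (fun j : ℕ => ((2:ℝ) ^ j)⁻¹) atTop (nhds 0) := by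
        simpa [inv_pow] using
          tendsto_pow_atTop_nhds_zero_of_lt_one (by norm_num : (0:ℝ) ≤ 2⁻¹)
            (by norm_num : (2:ℝ)⁻¹ < 1)
      simpa using this.const_mul 2
    have hev2 : ∀ᶠ j : ℕ in atTop, 2 * ((2:ℝ) ^ j)⁻¹ ≤ R :=
      (htend2.eventually (eventually_le_nhds hR))
    filter_upwards [hev1, hev2, eventually_ge_atTop 1] with j hj1 hj2 hj3
    have hjpos : (0:ℝ) < j := by exact_mod_cast hj3
    rw [hu]
    simp only []
    rw [log_two_zpow j, le_div_iff_of_neg (by nlinarith)]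
    have := hlogosc j hj2
    nlinarith
  -- frequent upper bound on the ratio
  have hfreq : ∀ b : ℝ, h < b → ∃ᶠ j : ℕ in atTop, u j ≤ b := by
    intro b hb
    have hlog2 : (0:ℝ) < Real.log 2 := Real.log_pos one_lt_two
    set γ : ℝ := (h + min b 1) / 2 with hγdef
    have hmin : h < min b 1 := lt_min hb h1
    have hγh : h < γ := by rw [hγdef]; linarith
    have hγb : γ < b := by have := min_le_left b 1; rw [hγdef]; linarith
    have hγ1 : γ < 1 := by have := min_le_right b 1; rw [hγdef]; linarith
    have hγ0 : 0 < γ := lt_trans h0 hγh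
    have hγnot : γ ∉ holderSet f x₀ := fun hmem => absurd (le_csSup hbddS hmem) (not_le.2 hγh)
    have hfail : ∀ R : ℝ, 0 < R → ∃ x, ‖x - x₀‖ ≤ R ∧ ‖x - x₀‖ ^ γ < |f x - f x₀| := by
      intro R hR
      by_contra hcon
      push_neg at hcon
      exact hγnot ⟨hγ0.le, 1, R, one_pos, hR, fun x hx => by simpa using hcon x hx⟩
    rw [frequently_atTop]
    intro J
    set N : ℕ := max (max J 1) ⌈γ / (b - γ)⌉₊ with hN
    obtain ⟨x, hxR, hxlt⟩ := hfail (((2:ℝ) ^ N)⁻¹) (by positivity)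
    have hr0 : 0 < ‖x - x₀‖ := by
      rcases eq_or_lt_of_le (norm_nonneg (x - x₀)) with hz | hz
      · exfalso
        have hx0 : x = x₀ := by rwa [eq_comm, norm_eq_zero, sub_eq_zero] at hz
        rw [hx0, sub_self, sub_self, abs_zero] at hxlt
        exact absurd hxlt (not_lt.2 (Real.rpow_nonneg (norm_nonneg _) _))
      · exact hz
    have hPex : ∃ m : ℕ, ((2:ℝ) ^ (m + 1))⁻¹ < ‖x - x₀‖ := by
      obtain ⟨m, hm⟩ := exists_pow_lt_of_lt_one hr0 (by norm_num : (2:ℝ)⁻¹ < 1)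
      refine ⟨m, lt_of_le_of_lt ?_ hm⟩
      rw [← inv_pow]
      exact pow_le_pow_of_le_one (by norm_num) (by norm_num) (Nat.le_succ m)
    set j₀ : ℕ := Nat.find hPex with hj₀def
    have hj₀lt : ((2:ℝ) ^ (j₀ + 1))⁻¹ < ‖x - x₀‖ := Nat.find_spec hPex
    have hj₀ge : ‖x - x₀‖ ≤ ((2:ℝ) ^ j₀)⁻¹ := by
      rcases Nat.eq_zero_or_pos j₀ with hz | hpos
      · rw [hz, pow_zero, inv_one]
        refine hxR.trans ?_
        rw [inv_le_one_iff₀]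
        right
        exact one_le_pow₀ one_le_two
      · have hmin' := Nat.find_min hPex (Nat.sub_lt hpos Nat.one_pos)
        rw [show Nat.find hPex - 1 + 1 = j₀ from Nat.sub_add_cancel hpos] at hmin'
        exact not_lt.1 hmin'
    have hNj : N ≤ j₀ := by
      by_contra hc
      push_neg at hc
      have hle' : ((2:ℝ) ^ N)⁻¹ ≤ ((2:ℝ) ^ (j₀ + 1))⁻¹ := by
        apply inv_anti₀ (by positivity)
        exact pow_le_pow_right₀ one_le_two hc
      linarith
    refine ⟨j₀, le_trans (le_trans (le_max_left J 1) (le_max_left _ _)) hNj, ?_⟩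
    have hmemx : x ∈ tripleDyadicCube j₀ x₀ := mem_triple_of_norm_le hj₀ge
    have hosc_lb : (((2:ℝ) ^ (j₀ + 1))⁻¹) ^ γ ≤ osc f (tripleDyadicCube j₀ x₀) := by
      have h1' := abs_sub_le_osc hf hmemx x0_mem_triple
      have h2' : (((2:ℝ) ^ (j₀ + 1))⁻¹) ^ γ ≤ ‖x - x₀‖ ^ γ :=
        Real.rpow_le_rpow (by positivity) hj₀lt.le hγ0.le
      linarith
    have hlog_lb : -(((j₀:ℝ) + 1) * γ * Real.log 2) ≤
        Real.log (osc f (tripleDyadicCube j₀ x₀)) := by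
      have hl := Real.log_le_log (by positivity) hosc_lb
      rw [Real.log_rpow (by positivity), Real.log_inv, Real.log_pow] at hl
      push_cast at hl
      nlinarith [hl]
    have hj₀1 : 1 ≤ j₀ := le_trans (le_trans (le_max_right J 1) (le_max_left _ _)) hNj
    have hjpos : (0:ℝ) < j₀ := by exact_mod_cast hj₀1
    have hjbig : γ / (b - γ) ≤ (j₀:ℝ) := by
      refine le_trans (Nat.le_ceil _) ?_
      exact_mod_cast le_trans (le_max_right (max J 1) _) hNj
    have hγle : γ ≤ (j₀:ℝ) * (b - γ) := by
      rw [div_le_iff₀ (by linarith)] at hjbig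
      linarith
    rw [hu]
    simp only []
    rw [log_two_zpow j₀, div_le_iff_of_neg (by nlinarith)]
    nlinarith
  -- conclude
  have hbddge : IsBoundedUnder (· ≥ ·) atTop u := ⟨0, by
    rw [eventually_map]
    exact hev 0 h0⟩
  have hcob : IsCoboundedUnder (· ≥ ·) atTop u :=
    IsCoboundedUnder.of_frequently_le (hfreq (h + 1) (by linarith))
  apply le_antisymm
  · exact le_of_forall_lt_imp_le_of_dense fun a ha => le_liminf_of_le hcob (hev a ha)
  · exact le_of_forall_gt_imp_ge_of_dense fun b hb => liminf_le_of_frequently_le (hfreq b hb) hbddge
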